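/- If x ∈ 𝔰𝔭_{2n}(k) is diagonalizable, then there exists g ∈ Sp_{2n}(k) such that g·x·g⁻¹ = diag(t₁,…,tₙ,t₁,…,tₙ) for some t₁,…,tₙ ∈ k; that is, every semisimple element of 𝔰𝔭_{2n}(k) is Sp_{2n}(k)-conjugate to an element of 𝔱. -/

import Mathlib

open Matrix

/-- The Gram matrix `J = [[0, 1ₙ], [1ₙ, 0]]` of the symplectic form. -/
def Jsp (k : Type*) [Field k] (n : ℕ) : Matrix (Fin n ⊕ Fin n) (Fin n ⊕ Fin n) k :=
  Matrix.fromBlocks 0 1 1 0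

set_option linter.unusedSectionVars false
set_option linter.unusedVariables false


variable {k : Type} [Field k]

section Step

variable {ι : Type} [Fintype ι] [DecidableEq ι]

/-- the target property -/
def SpConcl (G : Matrix ι ι k) (d : ι → k) : Prop :=
  ∃ (κ : Type) (_ : Fintype κ) (_ : DecidableEq κ) (Q : Matrix ι (κ ⊕ κ) k)
    (R : Matrix (κ ⊕ κ) ι k) (t : κ → k),
    Q * R = 1 ∧ R * Q = 1 ∧ Qᵀ * G * Q = Matrix.fromBlocks 0 1 1 0 ∧
    Matrix.diagonal d * Q = Q * Matrix.fromBlocks (Matrix.diagonal t) 0 0 (Matrix.diagonal t)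

variable (G : Matrix ι ι k) (d : ι → k) (a b : ι)

local notation "Sub" => {i : ι // i ≠ a ∧ i ≠ b}

def pt : Unit ⊕ Unit → ι := Sum.elim (fun _ => a) (fun _ => b)

def Eqv (hab : a ≠ b) : ((Unit ⊕ Unit) ⊕ Sub) ≃ ι where
  toFun := Sum.elim (pt a b) Subtype.val
  invFun p := if h1 : p = a then Sum.inl (Sum.inl ()) else
    if h2 : p = b then Sum.inl (Sum.inr ()) else Sum.inr ⟨p, h1, h2⟩
  left_inv x := by
    rcases x with (u | u) | ⟨p, h1, h2⟩
    · simp [pt]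
    · simp [pt, hab.symm]
    · simp [pt, h1, h2]
  right_inv p := by
    by_cases h1 : p = a
    · simp [pt, h1]
    · by_cases h2 : p = b <;> simp [pt, h1, h2, Ne.symm hab]

def blkA : Matrix (Unit ⊕ Unit) (Unit ⊕ Unit) k := Matrix.of fun r s => G (pt a b r) (pt a b s)
def blkB : Matrix (Unit ⊕ Unit) Sub k := Matrix.of fun r i => G (pt a b r) i.1
def blkC : Matrix Sub (Unit ⊕ Unit) k := Matrix.of fun i r => G i.1 (pt a b r)
def blkG0 : Matrix Sub Sub k := Matrix.of fun i j => G i.1 j.1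

lemma Ghat_eq (hab : a ≠ b) :
    G.submatrix (Eqv (ι := ι) a b hab) (Eqv (ι := ι) a b hab)
      = fromBlocks (blkA G a b) (blkB G a b) (blkC G a b) (blkG0 G a b) := by
  ext (r | i) (s | j) <;> rfl

def blkD : Matrix (Unit ⊕ Unit) (Unit ⊕ Unit) k :=
  diagonal (Sum.elim (fun _ => 1) (fun _ => (G a b)⁻¹))

def blkD' : Matrix (Unit ⊕ Unit) (Unit ⊕ Unit) k :=
  diagonal (Sum.elim (fun _ => 1) (fun _ => G a b))

def blkN : Matrix (Unit ⊕ Unit) Sub k :=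
  Matrix.of fun r i => -((G a b)⁻¹ * Sum.elim (fun _ => G i.1 b) (fun _ => G i.1 a) r)

def Smat : Matrix ((Unit ⊕ Unit) ⊕ Sub) ((Unit ⊕ Unit) ⊕ Sub) k :=
  fromBlocks (blkD G a b) (blkN G a b) 0 1

def Smat' : Matrix ((Unit ⊕ Unit) ⊕ Sub) ((Unit ⊕ Unit) ⊕ Sub) k :=
  fromBlocks (blkD' G a b) (-(blkD' G a b * blkN G a b)) 0 1

def Gnext : Matrix Sub Sub k :=
  Matrix.of fun i j =>
    G i.1 j.1 - (G a b)⁻¹ * G j.1 b * G i.1 a - (G a b)⁻¹ * G j.1 a * G i.1 b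

end Step

section Blocks

variable {ι : Type} [Fintype ι] [DecidableEq ι]
variable (G : Matrix ι ι k) (d : ι → k) (a b : ι)

local notation "Sub" => {i : ι // i ≠ a ∧ i ≠ b}

lemma L1 (hs : ∀ i j, G i j = G j i) (halt : ∀ i, G i i = 0) (hGab : G a b ≠ 0) :
    blkA G a b * blkN G a b + blkB G a b = 0 := by
  ext r i
  rcases r with u | u <;>
      simp [blkA, blkN, blkB, pt, Matrix.mul_apply, Fintype.sum_sum_type, halt]
  · rw [mul_inv_cancel_left₀ hGab, hs a i.1]; ring
  · rw [hs b a, mul_inv_cancel_left₀ hGab, hs b i.1]; ring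

lemma L2 (hs : ∀ i j, G i j = G j i) (halt : ∀ i, G i i = 0) (hGab : G a b ≠ 0) :
    (blkN G a b)ᵀ * blkA G a b + blkC G a b = 0 := by
  ext i s
  rcases s with u | u <;>
      simp [blkA, blkN, blkC, pt, Matrix.mul_apply, Fintype.sum_sum_type, halt] <;>
      field_simp
  · linear_combination (-(G i.1 a)) * hs b a
  · ring

lemma L3 (hs : ∀ i j, G i j = G j i) (halt : ∀ i, G i i = 0) (hGab : G a b ≠ 0) :
    blkD G a b * blkA G a b * blkD G a b = fromBlocks 0 1 1 0 := by
  ext r s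
  rcases r with u | u <;> rcases s with u' | u' <;>
      simp [blkD, blkA, pt, Matrix.mul_diagonal, Matrix.diagonal_mul, halt,
        mul_inv_cancel₀ hGab]
  rw [hs b a]
  field_simp

lemma L4 (hs : ∀ i j, G i j = G j i) :
    (blkN G a b)ᵀ * blkB G a b + blkG0 G a b = Gnext G a b := by
  ext i j
  simp [blkN, blkB, blkG0, Gnext, pt, Matrix.mul_apply, Fintype.sum_sum_type]
  linear_combination (-((G a b)⁻¹ * G i.1 b)) * hs a j.1 + (-((G a b)⁻¹ * G i.1 a)) * hs b j.1

lemma L6a (hGab : G a b ≠ 0) : blkD G a b * blkD' G a b = 1 := by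
  ext r s
  rcases r with u | u <;> rcases s with u' | u' <;>
    simp [blkD, blkD', Matrix.mul_apply, Fintype.sum_sum_type, Matrix.diagonal,
      Matrix.one_apply, inv_mul_cancel₀ hGab]

lemma L6b (hGab : G a b ≠ 0) : blkD' G a b * blkD G a b = 1 := by
  ext r s
  rcases r with u | u <;> rcases s with u' | u' <;>
    simp [blkD, blkD', Matrix.mul_apply, Fintype.sum_sum_type, Matrix.diagonal,
      Matrix.one_apply, mul_inv_cancel₀ hGab]

lemma L6 (hGab : G a b ≠ 0) : Smat G a b * Smat' G a b = 1 := by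
  rw [Smat, Smat', fromBlocks_multiply]
  rw [show blkD G a b * -(blkD' G a b * blkN G a b) + blkN G a b * (1 : Matrix {i : ι // i ≠ a ∧ i ≠ b} {i : ι // i ≠ a ∧ i ≠ b} k) = 0 by
    rw [Matrix.mul_neg, ← Matrix.mul_assoc, L6a G a b hGab, Matrix.one_mul, Matrix.mul_one]
    exact neg_add_cancel _]
  simp [L6a G a b hGab, Matrix.fromBlocks_one]

lemma L6' (hGab : G a b ≠ 0) : Smat' G a b * Smat G a b = 1 := by
  rw [Smat, Smat', fromBlocks_multiply]
  rw [show blkD' G a b * blkN G a b + -(blkD' G a b * blkN G a b) * (1 : Matrix {i : ι // i ≠ a ∧ i ≠ b} {i : ι // i ≠ a ∧ i ≠ b} k) = 0 by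
    rw [Matrix.mul_one]; exact add_neg_cancel _]
  simp [L6b G a b hGab, Matrix.fromBlocks_one]

lemma L5 (hab : a ≠ b) (hs : ∀ i j, G i j = G j i) (halt : ∀ i, G i i = 0)
    (hGab : G a b ≠ 0) :
    (Smat G a b)ᵀ * (G.submatrix (Eqv (ι := ι) a b hab) (Eqv (ι := ι) a b hab)) * Smat G a b
      = fromBlocks (fromBlocks 0 1 1 0) 0 0 (Gnext G a b) := by
  rw [Ghat_eq G a b hab, Smat, fromBlocks_transpose, transpose_zero, transpose_one,
    blkD, diagonal_transpose, ← blkD, fromBlocks_multiply, fromBlocks_multiply]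
  simp only [Matrix.zero_mul, Matrix.mul_zero, add_zero, zero_add, Matrix.one_mul,
    Matrix.mul_one]
  rw [L2 G a b hs halt hGab, Matrix.zero_mul, Matrix.zero_mul, zero_add,
    L4 G a b hs, L3 G a b hs halt hGab,
    Matrix.mul_assoc (blkD G a b) (blkA G a b) (blkN G a b), ← Matrix.mul_add,
    L1 G a b hs halt hGab, Matrix.mul_zero]

lemma L7diag (hab : a ≠ b) (hdab : d a = d b) :
    (diagonal d).submatrix (Eqv (ι := ι) a b hab) (Eqv (ι := ι) a b hab)
      = fromBlocks (diagonal (fun _ : Unit ⊕ Unit => d a)) 0 0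
          (diagonal (fun i : Sub => d i.1)) := by
  rw [Matrix.submatrix_diagonal_equiv, Matrix.fromBlocks_diagonal]
  refine congrArg Matrix.diagonal (funext fun x => ?_)
  rcases x with (u | u) | i
  · rfl
  · exact hdab.symm
  · rfl

lemma L7b (hd : ∀ i j, d i ≠ d j → G i j = 0) (hdab : d a = d b) :
    diagonal (fun _ : Unit ⊕ Unit => d a) * blkN G a b
      = blkN G a b * diagonal (fun i : Sub => d i.1) := by
  ext r i
  rw [Matrix.diagonal_mul, Matrix.mul_diagonal]
  by_cases hdi : d i.1 = d a
  · rw [hdi]; ring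
  · rcases r with u | u <;> simp only [blkN, Matrix.of_apply, Sum.elim_inl, Sum.elim_inr]
    · rw [hd i.1 b (by rw [← hdab]; exact hdi)]; ring
    · rw [hd i.1 a hdi]; ring

lemma L7c (hd : ∀ i j, d i ≠ d j → G i j = 0) (hdab : d a = d b) :
    fromBlocks (diagonal (fun _ : Unit ⊕ Unit => d a)) 0 0
        (diagonal (fun i : Sub => d i.1)) * Smat G a b
      = Smat G a b * fromBlocks (diagonal (fun _ : Unit ⊕ Unit => d a)) 0 0
          (diagonal (fun i : Sub => d i.1)) := by
  rw [Smat, fromBlocks_multiply, fromBlocks_multiply]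
  rw [← L7b G d a b hd hdab]
  rw [show (diagonal fun _ : Unit ⊕ Unit => d a) * blkD G a b
      = blkD G a b * (diagonal fun _ : Unit ⊕ Unit => d a) by
    rw [blkD, diagonal_mul_diagonal, diagonal_mul_diagonal]
    exact congrArg _ (funext fun i => mul_comm _ _)]
  simp

lemma P1 (hs : ∀ i j, G i j = G j i) (i j : Sub) : Gnext G a b i j = Gnext G a b j i := by
  simp only [Gnext, Matrix.of_apply]
  linear_combination hs i.1 j.1

lemma P2 [CharP k 2] (halt : ∀ i, G i i = 0) (i : Sub) : Gnext G a b i i = 0 := by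
  simp only [Gnext, Matrix.of_apply]
  rw [halt i.1]
  have h2 : (2 : k) = 0 := CharTwo.two_eq_zero
  linear_combination (-((G a b)⁻¹ * G i.1 a * G i.1 b)) * h2

lemma P3 (hd : ∀ i j, d i ≠ d j → G i j = 0) (hdab : d a = d b) (i j : Sub)
    (hne : d i.1 ≠ d j.1) : Gnext G a b i j = 0 := by
  simp only [Gnext, Matrix.of_apply]
  rw [hd i.1 j.1 hne]
  by_cases hia : d i.1 = d a
  · rw [hd j.1 b (by rw [← hdab, ← hia]; exact fun h => hne h.symm),
      hd j.1 a (by rw [← hia]; exact fun h => hne h.symm)]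
    ring
  · rw [hd i.1 a hia, hd i.1 b (by rw [← hdab]; exact hia)]
    ring

lemma P4 (hab : a ≠ b) (hs : ∀ i j, G i j = G j i) (halt : ∀ i, G i i = 0)
    (hGab : G a b ≠ 0) (hker : ∀ v : ι → k, G *ᵥ v = 0 → v = 0) :
    ∀ y : Sub → k, Gnext G a b *ᵥ y = 0 → y = 0 := by
  intro y hy
  have hMw : (fromBlocks (fromBlocks 0 1 1 0 : Matrix (Unit ⊕ Unit) (Unit ⊕ Unit) k) 0 0 (Gnext G a b)) *ᵥ
      (Sum.elim (0 : (Unit ⊕ Unit) → k) y) = 0 := by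
    rw [fromBlocks_mulVec]
    simp [hy]
  rw [← L5 G a b hab hs halt hGab] at hMw
  have e1 : (Smat' G a b)ᵀ * (Smat G a b)ᵀ = 1 := by
    rw [← Matrix.transpose_mul, L6 G a b hGab, Matrix.transpose_one]
  have h2 : (G.submatrix (Eqv (ι := ι) a b hab) (Eqv (ι := ι) a b hab)) *ᵥ
      (Smat G a b *ᵥ (Sum.elim (0 : (Unit ⊕ Unit) → k) y)) = 0 := by
    have h := congrArg (fun z => (Smat' G a b)ᵀ *ᵥ z) hMw
    simp only [Matrix.mulVec_mulVec, Matrix.mulVec_zero] at h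
    rw [← Matrix.mul_assoc, ← Matrix.mul_assoc, e1, Matrix.one_mul] at h
    rwa [Matrix.mulVec_mulVec]
  have h4 : G *ᵥ ((Smat G a b *ᵥ (Sum.elim (0 : (Unit ⊕ Unit) → k) y))
      ∘ (Eqv (ι := ι) a b hab).symm) = 0 := by
    rw [Matrix.submatrix_mulVec_equiv] at h2
    funext p
    have := congrFun h2 ((Eqv (ι := ι) a b hab).symm p)
    simpa using this
  have h6 := hker _ h4
  have h3 : Smat G a b *ᵥ (Sum.elim (0 : (Unit ⊕ Unit) → k) y) = 0 := by
    funext q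
    have := congrFun h6 ((Eqv (ι := ι) a b hab) q)
    simpa using this
  have h7 : Sum.elim (0 : (Unit ⊕ Unit) → k) y = 0 := by
    have h := congrArg (fun z => Smat' G a b *ᵥ z) h3
    simpa [Matrix.mulVec_mulVec, L6' G a b hGab] using h
  funext i
  have := congrFun h7 (Sum.inr i)
  simpa using this

end Blocks

section Assemble

variable {ι : Type} [Fintype ι] [DecidableEq ι]
variable (G : Matrix ι ι k) (d : ι → k) (a b : ι)

local notation "Sub" => {i : ι // i ≠ a ∧ i ≠ b}

lemma Ftrans (κ' : Type) [DecidableEq κ'] :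
    (fromBlocks (fromBlocks 0 1 1 0 : Matrix (Unit ⊕ Unit) (Unit ⊕ Unit) k) 0 0
        (fromBlocks 0 1 1 0 : Matrix (κ' ⊕ κ') (κ' ⊕ κ') k)).submatrix
      (Equiv.sumSumSumComm Unit Unit κ' κ').symm (Equiv.sumSumSumComm Unit Unit κ' κ').symm
    = (fromBlocks 0 1 1 0 : Matrix ((Unit ⊕ κ') ⊕ (Unit ⊕ κ')) ((Unit ⊕ κ') ⊕ (Unit ⊕ κ')) k) := by
  ext x y
  rcases x with (u | j) | (u | j) <;> rcases y with (u' | j') | (u' | j') <;>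
    simp [Matrix.one_apply]

lemma Ttrans (κ' : Type) [DecidableEq κ'] (c : k) (t' : κ' → k) :
    (fromBlocks (diagonal (fun _ : Unit ⊕ Unit => c)) 0 0
        (fromBlocks (diagonal t') 0 0 (diagonal t'))).submatrix
      (Equiv.sumSumSumComm Unit Unit κ' κ').symm (Equiv.sumSumSumComm Unit Unit κ' κ').symm
    = fromBlocks (diagonal (Sum.elim (fun _ : Unit => c) t')) 0 0
        (diagonal (Sum.elim (fun _ : Unit => c) t')) := by
  ext x y
  rcases x with (u | j) | (u | j) <;> rcases y with (u' | j') | (u' | j') <;>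
    simp [Matrix.diagonal_apply, Subtype.ext_iff]

lemma assemble (hab : a ≠ b) (hs : ∀ i j, G i j = G j i) (halt : ∀ i, G i i = 0)
    (hGab : G a b ≠ 0) (hd : ∀ i j, d i ≠ d j → G i j = 0) (hdab : d a = d b)
    (IH : SpConcl (Gnext G a b) (fun i : Sub => d i.1)) : SpConcl G d := by
  obtain ⟨κ', i1, i2, Q', R', t', hQR', hRQ', hGram', hcomm'⟩ := IH
  set E := Eqv (ι := ι) a b hab with hE
  set F := Equiv.sumSumSumComm Unit Unit κ' κ' with hF
  set W : Matrix ((Unit ⊕ Unit) ⊕ Sub) ((Unit ⊕ Unit) ⊕ (κ' ⊕ κ')) k :=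
    fromBlocks 1 0 0 Q' with hW
  set W' : Matrix ((Unit ⊕ Unit) ⊕ (κ' ⊕ κ')) ((Unit ⊕ Unit) ⊕ Sub) k :=
    fromBlocks 1 0 0 R' with hW'
  set Qρ := Smat G a b * W with hQρ
  set Rρ := W' * Smat' G a b with hRρ
  set Dblk := fromBlocks (diagonal (fun _ : Unit ⊕ Unit => d a)) 0 0
      (diagonal (fun i : Sub => d i.1)) with hDblk
  set That := fromBlocks (diagonal (fun _ : Unit ⊕ Unit => d a)) 0 0
      (fromBlocks (diagonal t') 0 0 (diagonal t')) with hThat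
  have hWW' : W * W' = 1 := by
    rw [hW, hW', fromBlocks_multiply]
    simp [hQR', Matrix.fromBlocks_one]
  have hW'W : W' * W = 1 := by
    rw [hW, hW', fromBlocks_multiply]
    simp [hRQ', Matrix.fromBlocks_one]
  have hQRρ : Qρ * Rρ = 1 := by
    rw [hQρ, hRρ, Matrix.mul_assoc, ← Matrix.mul_assoc W, hWW', Matrix.one_mul,
      L6 G a b hGab]
  have hRQρ : Rρ * Qρ = 1 := by
    rw [hQρ, hRρ, Matrix.mul_assoc, ← Matrix.mul_assoc (Smat' G a b), L6' G a b hGab,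
      Matrix.one_mul, hW'W]
  have hGramρ : Qρᵀ * (G.submatrix E E) * Qρ
      = fromBlocks (fromBlocks 0 1 1 0 : Matrix (Unit ⊕ Unit) (Unit ⊕ Unit) k) 0 0
          (fromBlocks 0 1 1 0 : Matrix (κ' ⊕ κ') (κ' ⊕ κ') k) := by
    rw [hQρ, Matrix.transpose_mul]
    calc Wᵀ * (Smat G a b)ᵀ * (G.submatrix E E) * (Smat G a b * W)
        = Wᵀ * ((Smat G a b)ᵀ * (G.submatrix E E) * Smat G a b) * W := by
          simp only [Matrix.mul_assoc]
      _ = _ := by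
          rw [hE, L5 G a b hab hs halt hGab, hW, fromBlocks_transpose, fromBlocks_multiply,
            fromBlocks_multiply]
          simp [hGram']
  have hcommρ : Dblk * Qρ = Qρ * That := by
    rw [hQρ, ← Matrix.mul_assoc, hDblk, L7c G d a b hd hdab, Matrix.mul_assoc,
      Matrix.mul_assoc]
    congr 1
    rw [hW, hThat, fromBlocks_multiply, fromBlocks_multiply]
    simp [hcomm']
  refine ⟨Unit ⊕ κ', inferInstance, inferInstance,
    Qρ.submatrix E.symm F.symm, Rρ.submatrix F.symm E.symm,
    Sum.elim (fun _ : Unit => d a) t', ?_, ?_, ?_, ?_⟩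
  · rw [Matrix.submatrix_mul_equiv Qρ Rρ _ F.symm _, hQRρ, Matrix.submatrix_one_equiv]
  · rw [Matrix.submatrix_mul_equiv Rρ Qρ _ E.symm _, hRQρ, Matrix.submatrix_one_equiv]
  · have hG : G = (G.submatrix E E).submatrix E.symm E.symm := by
      rw [Matrix.submatrix_submatrix]
      simp [Equiv.self_comp_symm]
    rw [Matrix.transpose_submatrix]
    conv_lhs => rw [hG]
    rw [Matrix.submatrix_mul_equiv Qρᵀ (G.submatrix E E) _ E.symm _,
      Matrix.submatrix_mul_equiv _ Qρ _ E.symm _]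
    rw [show (Qρᵀ * G.submatrix ⇑E ⇑E) * Qρ
        = fromBlocks (fromBlocks 0 1 1 0 : Matrix (Unit ⊕ Unit) (Unit ⊕ Unit) k) 0 0
          (fromBlocks 0 1 1 0 : Matrix (κ' ⊕ κ') (κ' ⊕ κ') k) from hGramρ]
    exact Ftrans κ'
  · have hDd : diagonal d = Dblk.submatrix E.symm E.symm := by
      rw [hDblk, ← L7diag d a b hab hdab, Matrix.submatrix_submatrix]
      simp [← hE, Equiv.self_comp_symm]
    rw [hDd, Matrix.submatrix_mul_equiv Dblk Qρ _ E.symm _, hcommρ,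
      ← Matrix.submatrix_mul_equiv Qρ That _ F.symm _]
    congr 1
    rw [hThat]
    exact Ttrans κ' (d a) t'

end Assemble

theorem core [CharP k 2] (N : ℕ) : ∀ (ι : Type) [Fintype ι] [DecidableEq ι],
    Fintype.card ι = N → ∀ (G : Matrix ι ι k), (∀ i j, G i j = G j i) → (∀ i, G i i = 0) →
    ∀ (d : ι → k), (∀ i j, d i ≠ d j → G i j = 0) →
    (∀ v : ι → k, G *ᵥ v = 0 → v = 0) → SpConcl G d := by
  induction N using Nat.strong_induction_on with
  | _ N IH =>
    intro ι _ _ hcard G hs halt d hd hker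
    rcases isEmpty_or_nonempty ι with hemp | hne
    · refine ⟨Empty, inferInstance, inferInstance, 0, 0, 0, ?_, ?_, ?_, ?_⟩
      · ext i j; exact isEmptyElim i
      · ext i j; rcases i with i | i <;> exact i.elim
      · ext i j; rcases i with i | i <;> exact i.elim
      · ext i j; exact isEmptyElim i
    · obtain ⟨a⟩ := hne
      have hb : ∃ b, G a b ≠ 0 := by
        by_contra hcon
        push_neg at hcon
        have h0 : G *ᵥ Pi.single a 1 = 0 := by
          funext i
          simp [Matrix.mulVec_single]
          rw [hs i a]
          exact hcon i
        have := congrFun (hker _ h0) a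
        simp [Pi.single_apply] at this
      obtain ⟨b, hGab⟩ := hb
      have hab : a ≠ b := by rintro rfl; exact hGab (halt a)
      have hdab : d a = d b := by
        by_contra hcon; exact hGab (hd a b hcon)
      have hlt : Fintype.card {i : ι // i ≠ a ∧ i ≠ b} < N := by
        rw [← hcard]; exact Fintype.card_subtype_lt (x := a) (by simp)
      apply assemble G d a b hab hs halt hGab hd hdab
      exact IH _ hlt _ rfl (Gnext G a b) (P1 G a b hs) (P2 G a b halt)
        (fun i => d i.1) (P3 G d a b hd hdab) (P4 G a b hab hs halt hGab hker)

/-- Every diagonalizable (semisimple) element of `𝔰𝔭_{2n}(k)` is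
`Sp_{2n}(k)`-conjugate to an element `diag(t₁,…,tₙ,t₁,…,tₙ)` of `𝔱`. -/
theorem stmt_9 (k : Type) [Field k] [IsAlgClosed k] [CharP k 2] (n : ℕ) (hn : 1 ≤ n)
    (x : Matrix (Fin n ⊕ Fin n) (Fin n ⊕ Fin n) k)
    (hx : xᵀ * Jsp k n = Jsp k n * x)
    (hdiag : ∃ u : Matrix (Fin n ⊕ Fin n) (Fin n ⊕ Fin n) k, IsUnit u ∧
      ∃ d : Fin n ⊕ Fin n → k, u * x * u⁻¹ = Matrix.diagonal d) :
    ∃ g : Matrix (Fin n ⊕ Fin n) (Fin n ⊕ Fin n) k,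
      IsUnit g ∧ gᵀ * Jsp k n * g = Jsp k n ∧
      ∃ t : Fin n → k,
        g * x * g⁻¹ = Matrix.fromBlocks (Matrix.diagonal t) 0 0 (Matrix.diagonal t) := by
  obtain ⟨u, hu, dvec, hux⟩ := hdiag
  have hudet : IsUnit u.det := (Matrix.isUnit_iff_isUnit_det u).1 hu
  have huu : u * u⁻¹ = 1 := Matrix.mul_nonsing_inv u hudet
  have huu' : u⁻¹ * u = 1 := Matrix.nonsing_inv_mul u hudet
  set P0 := u⁻¹ with hP0
  have unit_of : ∀ (A B : Matrix (Fin n ⊕ Fin n) (Fin n ⊕ Fin n) k), A * B = 1 → IsUnit A :=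
    fun A B h => (Matrix.isUnit_iff_isUnit_det A).2 (IsUnit.of_mul_eq_one (a := A.det) B.det
      (by rw [← Matrix.det_mul, h, Matrix.det_one]))
  have hxP0 : x * P0 = P0 * diagonal dvec := by
    have h1 : P0 * (u * x * P0) = x * P0 := by
      rw [← Matrix.mul_assoc, ← Matrix.mul_assoc, huu', Matrix.one_mul]
    rw [hux] at h1
    exact h1.symm
  have hJsym : (Jsp k n)ᵀ = Jsp k n := by
    rw [Jsp, fromBlocks_transpose, transpose_zero, transpose_one]
  have hP0unit : IsUnit P0 := unit_of _ _ huu'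
  have hP0t : IsUnit P0ᵀ := by
    rw [Matrix.isUnit_iff_isUnit_det, Matrix.det_transpose]
    exact (Matrix.isUnit_iff_isUnit_det _).1 hP0unit
  have hJJ : Jsp k n * Jsp k n = 1 := by
    rw [Jsp, fromBlocks_multiply]
    simp [Matrix.fromBlocks_one]
  have hJunit : IsUnit (Jsp k n) := unit_of _ _ hJJ
  set G := P0ᵀ * Jsp k n * P0 with hG
  have hGunit : IsUnit G := (hP0t.mul hJunit).mul hP0unit
  have hGdet : IsUnit G.det := (Matrix.isUnit_iff_isUnit_det G).1 hGunit
  have hker : ∀ v : Fin n ⊕ Fin n → k, G *ᵥ v = 0 → v = 0 := by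
    intro v hv
    calc v = (G⁻¹ * G) *ᵥ v := by rw [Matrix.nonsing_inv_mul G hGdet, Matrix.one_mulVec]
      _ = G⁻¹ *ᵥ (G *ᵥ v) := by rw [Matrix.mulVec_mulVec]
      _ = 0 := by rw [hv, Matrix.mulVec_zero]
  have hGsym : Gᵀ = G := by
    rw [hG, Matrix.transpose_mul, Matrix.transpose_mul, Matrix.transpose_transpose, hJsym,
      Matrix.mul_assoc]
  have hGs : ∀ i j, G i j = G j i := by
    intro i j
    conv_lhs => rw [← hGsym]
    rfl
  have hJalt : ∀ v : Fin n ⊕ Fin n → k, v ⬝ᵥ (Jsp k n *ᵥ v) = 0 := by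
    intro v
    have hv : Jsp k n *ᵥ v = Sum.elim (fun i => v (Sum.inr i)) (fun i => v (Sum.inl i)) := by
      funext p
      rcases p with i | i <;>
        simp [Jsp, Matrix.mulVec, dotProduct, Fintype.sum_sum_type, Matrix.one_apply]
    rw [hv]
    simp only [dotProduct, Fintype.sum_sum_type, Sum.elim_inl, Sum.elim_inr]
    rw [← Finset.sum_add_distrib]
    apply Finset.sum_eq_zero
    intro i _
    rw [mul_comm (v (Sum.inr i))]
    exact CharTwo.add_self_eq_zero _
  have halt : ∀ i, G i i = 0 := by
    intro i
    have h1 : G i i = (fun p => P0 p i) ⬝ᵥ (Jsp k n *ᵥ (fun p => P0 p i)) := by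
      rw [hG, Matrix.mul_assoc, Matrix.mul_apply]
      simp only [Matrix.mul_apply, Matrix.mulVec, dotProduct, Matrix.transpose_apply]
    rw [h1]
    exact hJalt _
  have hd : ∀ i j, dvec i ≠ dvec j → G i j = 0 := by
    have hcomm : G * diagonal dvec = diagonal dvec * G := by
      calc G * diagonal dvec = P0ᵀ * Jsp k n * (P0 * diagonal dvec) := by
            rw [hG, Matrix.mul_assoc]
        _ = P0ᵀ * (Jsp k n * (x * P0)) := by rw [← hxP0, Matrix.mul_assoc]
        _ = P0ᵀ * ((Jsp k n * x) * P0) := by rw [Matrix.mul_assoc]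
        _ = P0ᵀ * ((xᵀ * Jsp k n) * P0) := by rw [hx]
        _ = (P0ᵀ * xᵀ) * (Jsp k n * P0) := by simp only [Matrix.mul_assoc]
        _ = (x * P0)ᵀ * (Jsp k n * P0) := by rw [Matrix.transpose_mul]
        _ = (P0 * diagonal dvec)ᵀ * (Jsp k n * P0) := by rw [hxP0]
        _ = diagonal dvec * (P0ᵀ * (Jsp k n * P0)) := by
            rw [Matrix.transpose_mul, Matrix.diagonal_transpose, Matrix.mul_assoc]
        _ = diagonal dvec * G := by rw [hG, Matrix.mul_assoc]
    intro i j hne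
    have h2 : G i j * dvec j = dvec i * G i j := by
      rw [← Matrix.mul_diagonal, ← Matrix.diagonal_mul, hcomm]
    by_contra hG0
    rw [mul_comm (dvec i)] at h2
    exact hne ((mul_left_cancel₀ hG0 h2).symm ▸ rfl)
  obtain ⟨κ, iκ1, iκ2, Q, R, t, hQR, hRQ, hGram, hcommQ⟩ :=
    core (k := k) (Fintype.card (Fin n ⊕ Fin n)) (Fin n ⊕ Fin n) rfl G hGs halt dvec hd hker
  have hlin1 : Matrix.toLin' Q ∘ₗ Matrix.toLin' R = LinearMap.id := by
    rw [← Matrix.toLin'_mul, hQR, Matrix.toLin'_one]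
  have hlin2 : Matrix.toLin' R ∘ₗ Matrix.toLin' Q = LinearMap.id := by
    rw [← Matrix.toLin'_mul, hRQ, Matrix.toLin'_one]
  have hcards :=
    (LinearEquiv.ofLinear (Matrix.toLin' Q) (Matrix.toLin' R) hlin1 hlin2).finrank_eq
  rw [Module.finrank_fintype_fun_eq_card, Module.finrank_fintype_fun_eq_card] at hcards
  have hκ : Fintype.card κ = n := by
    simp [Fintype.card_sum] at hcards
    omega
  set ε : κ ≃ Fin n := Fintype.equivFinOfCardEq hκ with hε
  set σ : (κ ⊕ κ) ≃ (Fin n ⊕ Fin n) := Equiv.sumCongr ε ε with hσ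
  set τ : (Fin n ⊕ Fin n) ≃ (Fin n ⊕ Fin n) := Equiv.refl _ with hτ
  set Q' := Q.submatrix ⇑τ ⇑σ.symm with hQ'
  set R' := R.submatrix ⇑σ.symm ⇑τ with hR'
  have hQR' : Q' * R' = 1 := by
    rw [hQ', hR', Matrix.submatrix_mul_equiv Q R _ σ.symm _, hQR,
      Matrix.submatrix_one_equiv]
  have hRQ' : R' * Q' = 1 := by
    rw [hQ', hR', Matrix.submatrix_mul_equiv R Q _ τ _, hRQ, Matrix.submatrix_one_equiv]
  have hGsub : G = G.submatrix ⇑τ ⇑τ := by simp [hτ]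
  have hJs : (fromBlocks 0 1 1 0 : Matrix (κ ⊕ κ) (κ ⊕ κ) k).submatrix ⇑σ.symm ⇑σ.symm
      = Jsp k n := by
    ext p q
    rcases p with i | i <;> rcases q with j | j <;>
      simp [Jsp, hσ, Matrix.one_apply]
  have hGram' : Q'ᵀ * G * Q' = Jsp k n := by
    rw [hQ', Matrix.transpose_submatrix]
    conv_lhs => rw [hGsub]
    rw [Matrix.submatrix_mul_equiv Qᵀ G _ τ _, Matrix.submatrix_mul_equiv _ Q _ τ _]
    rw [show Qᵀ * G * Q = (fromBlocks 0 1 1 0 : Matrix (κ ⊕ κ) (κ ⊕ κ) k) from hGram]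
    exact hJs
  have hT : (fromBlocks (diagonal t) 0 0 (diagonal t) : Matrix (κ ⊕ κ) (κ ⊕ κ) k).submatrix
      ⇑σ.symm ⇑σ.symm = fromBlocks (diagonal (t ∘ ε.symm)) 0 0 (diagonal (t ∘ ε.symm)) := by
    ext p q
    rcases p with i | i <;> rcases q with j | j <;>
      simp [hσ, Matrix.diagonal_apply]
  have hdd : diagonal dvec = (diagonal dvec).submatrix ⇑τ ⇑τ := by simp [hτ]
  have hcomm' : diagonal dvec * Q'
      = Q' * fromBlocks (diagonal (t ∘ ε.symm)) 0 0 (diagonal (t ∘ ε.symm)) := by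
    conv_lhs => rw [hdd]
    rw [hQ', Matrix.submatrix_mul_equiv _ Q _ τ _, hcommQ,
      ← Matrix.submatrix_mul_equiv Q _ _ σ.symm _, ← hQ', hT]
  set P := P0 * Q' with hP
  have hPunit : IsUnit P := by
    refine unit_of P (R' * u) ?_
    rw [hP, Matrix.mul_assoc, ← Matrix.mul_assoc Q', hQR', Matrix.one_mul, huu']
  have hPdet : IsUnit P.det := (Matrix.isUnit_iff_isUnit_det P).1 hPunit
  have hPJP : Pᵀ * Jsp k n * P = Jsp k n := by
    have h1 : Pᵀ * Jsp k n * P = Q'ᵀ * (G * Q') := by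
      rw [hP, Matrix.transpose_mul, hG]
      simp only [Matrix.mul_assoc]
    rw [h1, ← Matrix.mul_assoc, hGram']
  refine ⟨P⁻¹, ?_, ?_, t ∘ ε.symm, ?_⟩
  · exact unit_of P⁻¹ P (Matrix.nonsing_inv_mul P hPdet)
  · have hPt : IsUnit Pᵀ.det := by
      rw [Matrix.det_transpose]; exact hPdet
    rw [Matrix.transpose_nonsing_inv]
    conv_lhs => rw [← hPJP]
    calc Pᵀ⁻¹ * (Pᵀ * Jsp k n * P) * P⁻¹
        = (Pᵀ⁻¹ * Pᵀ) * (Jsp k n * (P * P⁻¹)) := by simp only [Matrix.mul_assoc]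
      _ = Jsp k n := by
          rw [Matrix.nonsing_inv_mul _ hPt, Matrix.mul_nonsing_inv _ hPdet,
            Matrix.one_mul, Matrix.mul_one]
  · rw [Matrix.nonsing_inv_nonsing_inv P hPdet]
    have hxP : x * P = P * fromBlocks (diagonal (t ∘ ε.symm)) 0 0 (diagonal (t ∘ ε.symm)) := by
      calc x * (P0 * Q') = (x * P0) * Q' := by rw [Matrix.mul_assoc]
        _ = P0 * (diagonal dvec * Q') := by rw [hxP0, Matrix.mul_assoc]
        _ = P0 * (Q' * fromBlocks (diagonal (t ∘ ε.symm)) 0 0 (diagonal (t ∘ ε.symm))) := by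
            rw [hcomm']
        _ = P * fromBlocks (diagonal (t ∘ ε.symm)) 0 0 (diagonal (t ∘ ε.symm)) := by
            rw [hP, Matrix.mul_assoc]
    rw [Matrix.mul_assoc, hxP, ← Matrix.mul_assoc, Matrix.nonsing_inv_mul P hPdet,
      Matrix.one_mul]
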